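/- Let p be a prime and G a group. For any elements x, y, z, t of G all of whose orders are powers of p, if x, y are adjacent or equal, y, z are adjacent or equal, and z, t are adjacent or equal in the enhanced power graph, then x, z are adjacent or equal, or y, t are adjacent or equal in the enhanced power graph. -/

import Mathlib

def powerGraph (G : Type*) [Group G] : SimpleGraph G where
  Adj x y := x ≠ y ∧ ((∃ n : ℤ, n ≠ 0 ∧ y = x ^ n) ∨ ∃ n : ℤ, n ≠ 0 ∧ x = y ^ n)
  symm := ⟨fun _ _ ⟨h, h2⟩ => ⟨h.symm, h2.symm⟩⟩
  loopless := ⟨fun _ ⟨h, _⟩ => h rfl⟩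

def enhancedPowerGraph (G : Type*) [Group G] : SimpleGraph G where
  Adj x y := x ≠ y ∧ ∃ z : G, x ∈ Subgroup.zpowers z ∧ y ∈ Subgroup.zpowers z
  symm := ⟨fun _ _ ⟨h, z, hx, hy⟩ => ⟨h.symm, z, hy, hx⟩⟩
  loopless := ⟨fun _ ⟨h, _⟩ => h rfl⟩

open Subgroup

/-- If `a ∈ ⟨c⟩`, `c` has finite order, `m ∣ orderOf c`, and `a ^ m = 1`, then
`a` lies in the subgroup generated by `c ^ (orderOf c / m)`. -/
lemma aux_mem_zpowers_pow {G : Type*} [Group G] {c a : G} (hN : orderOf c ≠ 0) {m : ℕ}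
    (hm : m ∣ orderOf c) (hac : a ∈ Subgroup.zpowers c) (ha : a ^ m = 1) :
    a ∈ Subgroup.zpowers (c ^ (orderOf c / m)) := by
  obtain ⟨i, rfl⟩ := mem_zpowers_iff.mp hac
  have hm0 : m ≠ 0 := by rintro rfl; exact hN (Nat.eq_zero_of_zero_dvd hm)
  have h1 : ((c ^ i) ^ (m : ℤ) : G) = 1 := by
    rw [← zpow_natCast] at ha; exact_mod_cast ha
  rw [← zpow_mul] at h1
  have hdvd : (orderOf c : ℤ) ∣ i * m := orderOf_dvd_iff_zpow_eq_one.mpr h1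
  have hNm : (orderOf c : ℤ) = (orderOf c / m : ℕ) * m := by
    exact_mod_cast (Nat.div_mul_cancel hm).symm
  rw [hNm] at hdvd
  have hdvd2 : ((orderOf c / m : ℕ) : ℤ) ∣ i :=
    (mul_dvd_mul_iff_right (by exact_mod_cast hm0 : (m : ℤ) ≠ 0)).mp hdvd
  obtain ⟨s, hs⟩ := hdvd2
  exact mem_zpowers_iff.mpr ⟨s, by rw [← zpow_natCast c, ← zpow_mul, ← hs]⟩

/-- One direction of comparability: if `a, b` have `p`-power orders `p ^ k ∣ p ^ l` and both
lie in `⟨c⟩`, then `a ∈ ⟨b⟩`. -/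
lemma aux_comparable_le {G : Type*} [Group G] {p : ℕ} (hp : p.Prime) {a b c : G} {k l : ℕ}
    (hk : orderOf a = p ^ k) (hl : orderOf b = p ^ l) (hkl : k ≤ l)
    (hac : a ∈ Subgroup.zpowers c) (hbc : b ∈ Subgroup.zpowers c) :
    a ∈ Subgroup.zpowers b := by
  by_cases hN : orderOf c = 0
  · -- infinite cyclic: a must be 1
    obtain ⟨i, rfl⟩ := mem_zpowers_iff.mp hac
    have h1 : ((c ^ i) ^ ((p ^ k : ℕ) : ℤ) : G) = 1 := by
      rw [zpow_natCast, ← hk]; exact pow_orderOf_eq_one _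
    rw [← zpow_mul] at h1
    have hd := orderOf_dvd_iff_zpow_eq_one.mpr h1
    rw [hN] at hd
    have hi : i * (p ^ k : ℕ) = 0 := by exact_mod_cast zero_dvd_iff.mp (by exact_mod_cast hd)
    have hpk : ((p ^ k : ℕ) : ℤ) ≠ 0 := by
      exact_mod_cast pow_ne_zero k hp.pos.ne'
    have : i = 0 := by
      rcases mul_eq_zero.mp hi with h | h
      · exact h
      · exact absurd h hpk
    rw [this, zpow_zero]
    exact one_mem _
  · have hpl : p ^ l ∣ orderOf c := hl ▸ orderOf_dvd_of_mem_zpowers hbc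
    set e : G := c ^ (orderOf c / p ^ l) with he
    have hple : p ^ l ≠ 0 := pow_ne_zero _ hp.pos.ne'
    have hdiv : orderOf c / p ^ l ∣ orderOf c := Nat.div_dvd_of_dvd hpl
    have horde : orderOf e = p ^ l := by
      have hpos : orderOf c / p ^ l ≠ 0 :=
        (Nat.div_pos (Nat.le_of_dvd (Nat.pos_of_ne_zero hN) hpl) (Nat.pos_of_ne_zero hple)).ne'
      rw [he, orderOf_pow' _ hpos, Nat.gcd_eq_right hdiv, Nat.div_div_self hpl hN]
    have hae : a ∈ Subgroup.zpowers e :=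
      aux_mem_zpowers_pow hN hpl hac
        (orderOf_dvd_iff_pow_eq_one.mp (hk ▸ pow_dvd_pow p hkl))
    have hbe : b ∈ Subgroup.zpowers e :=
      aux_mem_zpowers_pow hN hpl hbc (orderOf_dvd_iff_pow_eq_one.mp (by rw [hl]))
    have hfine : IsOfFinOrder e := by rw [← orderOf_pos_iff, horde]; exact pow_pos hp.pos l
    have hfin : Finite (Subgroup.zpowers e) := Set.Finite.to_subtype hfine.finite_zpowers
    have heq : Subgroup.zpowers b = Subgroup.zpowers e := by
      apply Subgroup.eq_of_le_of_card_ge (zpowers_le.mpr hbe)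
      rw [Nat.card_zpowers, Nat.card_zpowers, horde, hl]
    rw [heq]
    exact hae

/-- Two elements of `p`-power order lying in a common cyclic subgroup are comparable. -/
lemma aux_comparable {G : Type*} [Group G] {p : ℕ} (hp : p.Prime) {a b c : G}
    (ha : ∃ k : ℕ, orderOf a = p ^ k) (hb : ∃ k : ℕ, orderOf b = p ^ k)
    (hac : a ∈ Subgroup.zpowers c) (hbc : b ∈ Subgroup.zpowers c) :
    a ∈ Subgroup.zpowers b ∨ b ∈ Subgroup.zpowers a := by
  obtain ⟨k, hk⟩ := ha
  obtain ⟨l, hl⟩ := hb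
  rcases le_total k l with hkl | hkl
  · exact Or.inl (aux_comparable_le hp hk hl hkl hac hbc)
  · exact Or.inr (aux_comparable_le hp hl hk hkl hbc hac)

/-- For elements of `p`-power order, a path of length 3 in the enhanced power graph
(allowing equalities) forces a chord. -/
theorem enhanced_adj_of_chain_of_prime_pow {G : Type*} [Group G] {p : ℕ} (hp : p.Prime)
    {x y z t : G} (hx : ∃ k : ℕ, orderOf x = p ^ k) (hy : ∃ k : ℕ, orderOf y = p ^ k)
    (hz : ∃ k : ℕ, orderOf z = p ^ k) (ht : ∃ k : ℕ, orderOf t = p ^ k)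
    (hxy : x = y ∨ (enhancedPowerGraph G).Adj x y)
    (hyz : y = z ∨ (enhancedPowerGraph G).Adj y z)
    (hzt : z = t ∨ (enhancedPowerGraph G).Adj z t) :
    (x = z ∨ (enhancedPowerGraph G).Adj x z) ∨ (y = t ∨ (enhancedPowerGraph G).Adj y t) := by
  have cmp : ∀ a b : G, (∃ k : ℕ, orderOf a = p ^ k) → (∃ k : ℕ, orderOf b = p ^ k) →
      (a = b ∨ (enhancedPowerGraph G).Adj a b) →
      a ∈ Subgroup.zpowers b ∨ b ∈ Subgroup.zpowers a := by
    rintro a b ha hb (rfl | ⟨_, c, hac, hbc⟩)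
    · exact Or.inl (mem_zpowers a)
    · exact aux_comparable hp ha hb hac hbc
  have back : ∀ a b : G, a ∈ Subgroup.zpowers b ∨ b ∈ Subgroup.zpowers a →
      a = b ∨ (enhancedPowerGraph G).Adj a b := by
    rintro a b hab
    by_cases h : a = b
    · exact Or.inl h
    · rcases hab with hab | hab
      · exact Or.inr ⟨h, b, hab, mem_zpowers b⟩
      · exact Or.inr ⟨h, a, mem_zpowers a, hab⟩
  have c1 := cmp x y hx hy hxy
  have c2 := cmp y z hy hz hyz
  have c3 := cmp z t hz ht hzt
  rcases c2 with h2 | h2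
  · rcases c3 with h3 | h3
    · exact Or.inr (back y t (Or.inl
        (zpowers_le.mp ((zpowers_le.mpr h2).trans (zpowers_le.mpr h3)))))
    · exact Or.inr (back y t (aux_comparable hp hy ht h2 h3))
  · rcases c1 with h1 | h1
    · exact Or.inl (back x z (aux_comparable hp hx hz h1 h2))
    · exact Or.inl (back x z (Or.inr
        (zpowers_le.mp ((zpowers_le.mpr h2).trans (zpowers_le.mpr h1)))))
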